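/- For any ε > 0 and with γ = π/(2 arctan(ε T_max L)), the inequality γ arctan(ε f_t) ≥ arcsin(f_t/(T_max L)) holds for all f_t ∈ [0, T_max L]. -/

import Mathlib

open Real

lemma arctan_deriv2 (x : ℝ) :
    HasDerivAt (fun y : ℝ => 1 / (1 + y ^ 2)) (-(2 * x) / (1 + x ^ 2) ^ 2) x := by
  have h : HasDerivAt (fun y : ℝ => 1 + y ^ 2) (2 * x) x := by
    simpa using (hasDerivAt_pow 2 x).const_add 1
  have hne : (1 : ℝ) + x ^ 2 ≠ 0 := by positivity
  simp only [one_div]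
  exact h.inv hne

lemma concaveOn_arctan : ConcaveOn ℝ (Set.Ici (0:ℝ)) Real.arctan := by
  apply concaveOn_of_deriv2_nonpos' (convex_Ici 0)
  · exact fun x _ => (Real.differentiable_arctan x).differentiableWithinAt
  · intro x _
    rw [Real.deriv_arctan]
    exact ((arctan_deriv2 x).differentiableAt).differentiableWithinAt
  · intro x hx
    have : deriv^[2] Real.arctan x = deriv (deriv Real.arctan) x := rfl
    rw [this, Real.deriv_arctan, (arctan_deriv2 x).deriv]
    have hx0 : (0:ℝ) ≤ x := hx
    have : (0:ℝ) < (1 + x ^ 2) ^ 2 := by positivity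
    apply div_nonpos_of_nonpos_of_nonneg <;> nlinarith

lemma mul_arctan_le (s a : ℝ) (hs0 : 0 ≤ s) (hs1 : s ≤ 1) (ha : 0 ≤ a) :
    s * Real.arctan a ≤ Real.arctan (s * a) := by
  have := concaveOn_arctan.2 (Set.mem_Ici.2 ha) (Set.self_mem_Ici (a := (0:ℝ)))
    hs0 (by linarith : (0:ℝ) ≤ 1 - s) (by ring)
  simpa [smul_eq_mul, Real.arctan_zero] using this

theorem gamma_arctan_ge_arcsin
    (Tmax L ε : ℝ) (hT : 0 < Tmax) (hL : 0 < L) (hε : 0 < ε)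
    (γ : ℝ) (hγ : γ = π / (2 * Real.arctan (ε * (Tmax * L))))
    (ft : ℝ) (hft : ft ∈ Set.Icc 0 (Tmax * L)) :
    Real.arcsin (ft / (Tmax * L)) ≤ γ * Real.arctan (ε * ft) := by
  obtain ⟨hf0, hfM⟩ := hft
  set M := Tmax * L with hM
  have hM0 : 0 < M := mul_pos hT hL
  set s : ℝ := ft / M with hs
  have hs0 : 0 ≤ s := div_nonneg hf0 hM0.le
  have hs1 : s ≤ 1 := (div_le_one hM0).2 hfM
  have hA0 : 0 < Real.arctan (ε * M) := by simpa using Real.arctan_strictMono (show (0:ℝ) < ε * M by positivity)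
  -- Step 1: arcsin s ≤ π/2 * s
  have step1 : Real.arcsin s ≤ π / 2 * s := by
    have ht0 : 0 ≤ Real.arcsin s := Real.arcsin_nonneg.2 hs0
    have ht1 : Real.arcsin s ≤ π / 2 := Real.arcsin_le_pi_div_two s
    have := Real.mul_le_sin ht0 ht1
    rw [Real.sin_arcsin (by linarith) hs1] at this
    have hπ : 0 < π := Real.pi_pos
    calc Real.arcsin s = π / 2 * (2 / π * Real.arcsin s) := by
          field_simp
      _ ≤ π / 2 * s := by
          apply mul_le_mul_of_nonneg_left this (by positivity)
  -- Step 2: s * arctan (ε M) ≤ arctan (ε ft)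
  have step2 : s * Real.arctan (ε * M) ≤ Real.arctan (ε * ft) := by
    have h := mul_arctan_le s (ε * M) hs0 hs1 (by positivity)
    have : s * (ε * M) = ε * ft := by
      field_simp [hs]
      rw [hs]; exact div_mul_cancel₀ ft hM0.ne'
    rwa [this] at h
  have hγpos : 0 < γ := by
    rw [hγ]; positivity
  calc Real.arcsin s ≤ π / 2 * s := step1
    _ = γ * (s * Real.arctan (ε * M)) := by
        rw [hγ]; field_simp
    _ ≤ γ * Real.arctan (ε * ft) := by
        exact mul_le_mul_of_nonneg_left step2 hγpos.le
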